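/- Let 𝒱 be the real span of 4×4 quaternionic matrices of the form (a·1, Ã; A, -a·1) with a ∈ ℝ and A ∈ h₂(ℍ). For 𝒜 ∈ 𝒱, 𝒜² = h(𝒜,𝒜)·1 where h(𝒜,𝒜) = g(A,A) + a², and (1/4) Re tr(𝒜ℬ) = h(𝒜,ℬ). -/

import Mathlib

open Matrix

/-- The 2×2 hermitian quaternionic matrix `(t+x, y; y*, t-x)`. -/
noncomputable def qherm (t x : ℝ) (y : Quaternion ℝ) : Matrix (Fin 2) (Fin 2) (Quaternion ℝ) :=
  !![((t + x : ℝ) : Quaternion ℝ), y; star y, ((t - x : ℝ) : Quaternion ℝ)]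

/-- Trace reversal `Ã = A - (tr A)·1`. -/
noncomputable def qtilde (M : Matrix (Fin 2) (Fin 2) (Quaternion ℝ)) :
    Matrix (Fin 2) (Fin 2) (Quaternion ℝ) :=
  M - (Matrix.trace M) • (1 : Matrix (Fin 2) (Fin 2) (Quaternion ℝ))

/-- An element `(a·1, Ã; A, -a·1)` of the 7-dimensional Minkowski space
`𝒱 ⊆ ℍ[4]`, where `A = (t+x, y; y*, t-x) ∈ h₂(ℍ)`. -/
noncomputable def vmat (a t x : ℝ) (y : Quaternion ℝ) :
    Matrix (Fin 2 ⊕ Fin 2) (Fin 2 ⊕ Fin 2) (Quaternion ℝ) :=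
  Matrix.fromBlocks (a • 1) (qtilde (qherm t x y)) (qherm t x y) (-(a • 1))

/-- For `𝒜 ∈ 𝒱`, `𝒜² = h(𝒜,𝒜)·1` with `h(𝒜,𝒜) = g(A,A) + a²`, and
`(1/4) Re tr(𝒜 ℬ) = h(𝒜,ℬ)`, the Minkowski metric of signature (6,1). -/
lemma trace_fromBlocks' {l m α : Type*} [Fintype l] [Fintype m] [AddCommMonoid α]
    (A : Matrix l l α) (B : Matrix l m α) (C : Matrix m l α) (D : Matrix m m α) :
    (Matrix.fromBlocks A B C D).trace = A.trace + D.trace := by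
  simp [Matrix.trace, Fintype.sum_sum_type, Matrix.fromBlocks, Matrix.diag]

lemma qtilde_eq (t x : ℝ) (y : Quaternion ℝ) :
    qtilde (qherm t x y) = !![((x - t : ℝ) : Quaternion ℝ), y; star y, ((-x - t : ℝ) : Quaternion ℝ)] := by
  ext i j : 1
  fin_cases i <;> fin_cases j <;>
    simp [qtilde, qherm, Matrix.trace_fin_two, Matrix.one_apply, Quaternion.ext_iff] <;> ring

set_option maxHeartbeats 1000000 in
lemma key1 (t x : ℝ) (y : Quaternion ℝ) :
    qtilde (qherm t x y) * qherm t x y =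
      ((x ^ 2 - t ^ 2 + (y * star y).re : ℝ)) • (1 : Matrix (Fin 2) (Fin 2) (Quaternion ℝ)) := by
  rw [qtilde_eq]
  ext i j : 1
  fin_cases i <;> fin_cases j <;>
    simp [qherm, Matrix.mul_apply, Fin.sum_univ_two, Matrix.one_apply, Quaternion.ext_iff,
      Quaternion.re_mul, Quaternion.imI_mul, Quaternion.imJ_mul, Quaternion.imK_mul] <;> (try ring) <;> simp [Quaternion.re_one, Quaternion.imI_one, Quaternion.imJ_one, Quaternion.imK_one, Quaternion.re_zero, Quaternion.imI_zero, Quaternion.imJ_zero, Quaternion.imK_zero]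

set_option maxHeartbeats 1000000 in
lemma key2 (t x : ℝ) (y : Quaternion ℝ) :
    qherm t x y * qtilde (qherm t x y) =
      ((x ^ 2 - t ^ 2 + (y * star y).re : ℝ)) • (1 : Matrix (Fin 2) (Fin 2) (Quaternion ℝ)) := by
  rw [qtilde_eq]
  ext i j : 1
  fin_cases i <;> fin_cases j <;>
    simp [qherm, Matrix.mul_apply, Fin.sum_univ_two, Matrix.one_apply, Quaternion.ext_iff,
      Quaternion.re_mul, Quaternion.imI_mul, Quaternion.imJ_mul, Quaternion.imK_mul] <;> (try ring) <;> simp [Quaternion.re_one, Quaternion.imI_one, Quaternion.imJ_one, Quaternion.imK_one, Quaternion.re_zero, Quaternion.imI_zero, Quaternion.imJ_zero, Quaternion.imK_zero]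

set_option maxHeartbeats 1000000 in
theorem vmat_sq_and_quarter_retrace (a t x : ℝ) (y : Quaternion ℝ)
    (b s u : ℝ) (z : Quaternion ℝ) :
    vmat a t x y * vmat a t x y =
      (a ^ 2 + (-(t ^ 2 - x ^ 2 - (y * star y).re))) •
        (1 : Matrix (Fin 2 ⊕ Fin 2) (Fin 2 ⊕ Fin 2) (Quaternion ℝ)) ∧
    (1 / 4) * ((vmat a t x y * vmat b s u z).trace).re =
      a * b + (-(t * s) + x * u + (y * star z).re) := by
  
  constructor
  · rw [vmat, Matrix.fromBlocks_multiply, key1, key2]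
    ext i j : 1
    rcases i with i | i <;> rcases j with j | j <;> fin_cases i <;> fin_cases j <;>
      simp [Matrix.smul_mul, Matrix.mul_smul, Matrix.one_apply, Quaternion.ext_iff,
        smul_smul, Quaternion.re_one, Quaternion.imI_one, Quaternion.imJ_one, Quaternion.imK_one, Quaternion.re_zero, Quaternion.imI_zero, Quaternion.imJ_zero, Quaternion.imK_zero] <;> ring
  · rw [vmat, vmat, Matrix.fromBlocks_multiply, trace_fromBlocks']
    rw [qtilde_eq, qtilde_eq]
    simp only [Matrix.trace_add, Matrix.trace_fin_two, Matrix.mul_apply, Fin.sum_univ_two,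
      qherm, Matrix.smul_apply, Matrix.one_apply, Matrix.mul_one, Matrix.neg_apply,
      Matrix.cons_val', Matrix.cons_val_zero, Matrix.cons_val_one, Matrix.head_cons,
      Matrix.head_fin_const, Matrix.empty_val', Matrix.cons_val_fin_one]
    simp [Quaternion.re_mul, Quaternion.re_add, Quaternion.re_one]
    ring
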